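/- For all x ∈ ℝ and t > 0, K₁(x,t) = ∫₀^t e^{−β(t−τ)} K₀(x,τ) dτ admits the explicit representation K₁(x,t) = ∫₀^t ( e^{−x²/(4εy) − ay − β(t−y)} / (2√(πεy)) ) · J₀(2√(b y (t−y))) dy, where J₀ is the Bessel function of the first kind of order 0, defined by the power series J₀(z) = Σ_{k=0}^∞ ((−1)^k/(k!)²)(z/2)^{2k}. -/

import Mathlib

open MeasureTheory Real Set

noncomputable def J1 (z : ℝ) : ℝ :=
  ∑' k : ℕ, ((-1 : ℝ) ^ k / ((Nat.factorial k : ℝ) * (Nat.factorial (k + 1) : ℝ)))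
    * (z / 2) ^ (2 * k + 1)

noncomputable def K0 (a b ε β x t : ℝ) : ℝ :=
  (1 / (2 * Real.sqrt (π * ε))) *
    (Real.exp (-(x ^ 2 / (4 * ε * t)) - a * t) / Real.sqrt t
      - Real.sqrt b * ∫ y in (0:ℝ)..t,
          Real.exp (-(x ^ 2 / (4 * ε * y)) - a * y - β * (t - y)) / Real.sqrt (t - y)
            * J1 (2 * Real.sqrt (b * y * (t - y))))

noncomputable def K1 (a b ε β x t : ℝ) : ℝ :=
  ∫ τ in (0:ℝ)..t, Real.exp (-β * (t - τ)) * K0 a b ε β x τ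

noncomputable def J0 (z : ℝ) : ℝ :=
  ∑' k : ℕ, ((-1 : ℝ) ^ k / ((Nat.factorial k : ℝ)) ^ 2) * (z / 2) ^ (2 * k)

noncomputable def F1 (u : ℝ) : ℝ :=
  ∑' k : ℕ, ((-1 : ℝ) ^ k / ((Nat.factorial k : ℝ) * (Nat.factorial (k + 1) : ℝ))) * u ^ k

noncomputable def F0 (u : ℝ) : ℝ :=
  ∑' k : ℕ, ((-1 : ℝ) ^ k / ((Nat.factorial k : ℝ)) ^ 2) * u ^ k

lemma abs_term1_le (u : ℝ) (k : ℕ) :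
    |((-1 : ℝ) ^ k / ((Nat.factorial k : ℝ) * (Nat.factorial (k + 1) : ℝ))) * u ^ k|
      ≤ |u| ^ k / (Nat.factorial k : ℝ) := by
  rw [abs_mul, abs_div, abs_pow, abs_neg, abs_one, one_pow, abs_pow]
  have h1 : (1:ℝ) ≤ (Nat.factorial (k+1) : ℝ) := by exact_mod_cast Nat.one_le_iff_ne_zero.2 (Nat.factorial_ne_zero _)
  have h0 : (0:ℝ) < (Nat.factorial k : ℝ) := by exact_mod_cast Nat.factorial_pos k
  rw [abs_of_pos (by positivity), div_mul_eq_mul_div, one_mul]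
  rw [div_le_div_iff₀ (by positivity) h0]
  exact mul_le_mul_of_nonneg_left (le_mul_of_one_le_right h0.le h1) (pow_nonneg (abs_nonneg u) k)

lemma abs_term0_le (u : ℝ) (k : ℕ) :
    |((-1 : ℝ) ^ k / ((Nat.factorial k : ℝ)) ^ 2) * u ^ k|
      ≤ |u| ^ k / (Nat.factorial k : ℝ) := by
  rw [abs_mul, abs_div, abs_pow, abs_neg, abs_one, one_pow, abs_pow]
  have h0 : (0:ℝ) < (Nat.factorial k : ℝ) := by exact_mod_cast Nat.factorial_pos k
  have h1 : (1:ℝ) ≤ (Nat.factorial k : ℝ) := by exact_mod_cast Nat.one_le_iff_ne_zero.2 (Nat.factorial_ne_zero _)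
  rw [abs_of_pos (by positivity), div_mul_eq_mul_div, one_mul, sq, abs_pow]
  rw [div_le_div_iff₀ (by positivity) h0]
  exact mul_le_mul_of_nonneg_left (le_mul_of_one_le_right h0.le h1) (pow_nonneg (abs_nonneg u) k)

lemma summable_F1 (u : ℝ) :
    Summable (fun k : ℕ => ((-1 : ℝ) ^ k / ((Nat.factorial k : ℝ) * (Nat.factorial (k + 1) : ℝ))) * u ^ k) := by
  apply Summable.of_abs
  apply Summable.of_nonneg_of_le (fun k => abs_nonneg _) (abs_term1_le u)
  exact Real.summable_pow_div_factorial |u|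

lemma summable_F0 (u : ℝ) :
    Summable (fun k : ℕ => ((-1 : ℝ) ^ k / ((Nat.factorial k : ℝ)) ^ 2) * u ^ k) := by
  apply Summable.of_abs
  apply Summable.of_nonneg_of_le (fun k => abs_nonneg _) (abs_term0_le u)
  exact Real.summable_pow_div_factorial |u|

lemma abs_F1_le (u : ℝ) : |F1 u| ≤ Real.exp |u| := by
  rw [Real.exp_eq_exp_ℝ, NormedSpace.exp_eq_tsum_div]
  have h1 : |F1 u| ≤ ∑' k : ℕ, |((-1 : ℝ) ^ k / ((Nat.factorial k : ℝ) * (Nat.factorial (k + 1) : ℝ))) * u ^ k| := by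
    unfold F1; simpa only [Real.norm_eq_abs] using norm_tsum_le_tsum_norm (f := fun k : ℕ => ((-1 : ℝ) ^ k / ((Nat.factorial k : ℝ) * (Nat.factorial (k + 1) : ℝ))) * u ^ k) (by simpa only [Real.norm_eq_abs] using (summable_F1 u).abs)
  refine h1.trans ?_
  calc (∑' k : ℕ, |((-1 : ℝ) ^ k / ((Nat.factorial k : ℝ) * (Nat.factorial (k + 1) : ℝ))) * u ^ k|) ≤ ∑' k : ℕ, |u| ^ k / (Nat.factorial k : ℝ) :=
        Summable.tsum_le_tsum (abs_term1_le u) (summable_F1 u).abs (Real.summable_pow_div_factorial |u|)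

lemma abs_F0_le (u : ℝ) : |F0 u| ≤ Real.exp |u| := by
  rw [Real.exp_eq_exp_ℝ, NormedSpace.exp_eq_tsum_div]
  have h1 : |F0 u| ≤ ∑' k : ℕ, |((-1 : ℝ) ^ k / ((Nat.factorial k : ℝ)) ^ 2) * u ^ k| := by
    unfold F0; simpa only [Real.norm_eq_abs] using norm_tsum_le_tsum_norm (f := fun k : ℕ => ((-1 : ℝ) ^ k / ((Nat.factorial k : ℝ)) ^ 2) * u ^ k) (by simpa only [Real.norm_eq_abs] using (summable_F0 u).abs)
  refine h1.trans ?_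
  calc (∑' k : ℕ, |((-1 : ℝ) ^ k / ((Nat.factorial k : ℝ)) ^ 2) * u ^ k|) ≤ ∑' k : ℕ, |u| ^ k / (Nat.factorial k : ℝ) :=
        Summable.tsum_le_tsum (abs_term0_le u) (summable_F0 u).abs (Real.summable_pow_div_factorial |u|)

lemma measurable_F1 : Measurable F1 := by
  apply measurable_of_tendsto_metrizable (f := fun n u => ∑ k ∈ Finset.range n,
    ((-1 : ℝ) ^ k / ((Nat.factorial k : ℝ) * (Nat.factorial (k + 1) : ℝ))) * u ^ k)
  · intro n; exact Finset.measurable_sum _ (fun k _ => (measurable_id.pow_const k).const_mul _)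
  · rw [tendsto_pi_nhds]; intro u
    exact (summable_F1 u).hasSum.tendsto_sum_nat

lemma measurable_F0 : Measurable F0 := by
  apply measurable_of_tendsto_metrizable (f := fun n u => ∑ k ∈ Finset.range n,
    ((-1 : ℝ) ^ k / ((Nat.factorial k : ℝ)) ^ 2) * u ^ k)
  · intro n; exact Finset.measurable_sum _ (fun k _ => (measurable_id.pow_const k).const_mul _)
  · rw [tendsto_pi_nhds]; intro u
    exact (summable_F0 u).hasSum.tendsto_sum_nat
lemma J1_sqrt (v : ℝ) (hv : 0 ≤ v) : J1 (2 * Real.sqrt v) = Real.sqrt v * F1 v := by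
  unfold J1 F1
  rw [← tsum_mul_left]
  apply tsum_congr; intro k
  have h2 : 2 * Real.sqrt v / 2 = Real.sqrt v := by ring
  rw [h2, pow_succ, pow_mul, Real.sq_sqrt hv]
  ring

lemma J0_sqrt (v : ℝ) (hv : 0 ≤ v) : J0 (2 * Real.sqrt v) = F0 v := by
  unfold J0 F0
  apply tsum_congr; intro k
  have h2 : 2 * Real.sqrt v / 2 = Real.sqrt v := by ring
  rw [h2, pow_mul, Real.sq_sqrt hv]

lemma F0_zero : F0 0 = 1 := by
  unfold F0
  rw [tsum_eq_single 0]
  · simp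
  · intro k hk
    rw [zero_pow hk, mul_zero]

lemma key_int (c T : ℝ) (hc : 0 < c) (hT : 0 ≤ T) :
    (∫ s in Ioc (0:ℝ) T, F1 (c * s)) = (1 - F0 (c * T)) / c := by
  set coef : ℕ → ℝ := fun k => (-1 : ℝ) ^ k / ((Nat.factorial k : ℝ) * (Nat.factorial (k + 1) : ℝ)) with hcoef
  have hfact : ∀ k : ℕ, ((Nat.factorial k : ℝ)) ≠ 0 := fun k => by
    exact_mod_cast (Nat.factorial_pos k).ne'
  have hint : ∀ k : ℕ, IntegrableOn (fun s => coef k * (c * s) ^ k) (Ioc (0:ℝ) T) := by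
    intro k
    exact (Continuous.integrableOn_Ioc (by continuity))
  have hpow : ∀ k : ℕ, (∫ s in Ioc (0:ℝ) T, s ^ k) = T ^ (k + 1) / (k + 1) := by
    intro k
    rw [← intervalIntegral.integral_of_le hT, integral_pow, zero_pow (Nat.succ_ne_zero k), sub_zero]
  have hval : ∀ k : ℕ, (∫ s in Ioc (0:ℝ) T, coef k * (c * s) ^ k)
      = coef k * c ^ k * (T ^ (k + 1) / (k + 1)) := by
    intro k
    simp_rw [mul_pow, ← mul_assoc]
    rw [MeasureTheory.integral_const_mul, hpow]
  have hnorm : ∀ k : ℕ, (∫ s in Ioc (0:ℝ) T, ‖coef k * (c * s) ^ k‖)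
      = |coef k| * c ^ k * (T ^ (k + 1) / (k + 1)) := by
    intro k
    rw [← hpow k, ← MeasureTheory.integral_const_mul]
    apply setIntegral_congr_fun measurableSet_Ioc
    intro s hs
    have h1 : (0:ℝ) ≤ c * s := le_of_lt (mul_pos hc hs.1)
    dsimp only
    rw [Real.norm_eq_abs, abs_mul, abs_pow, abs_of_nonneg h1, mul_pow, mul_assoc]
  have hsum : Summable fun k : ℕ => ∫ s in Ioc (0:ℝ) T, ‖coef k * (c * s) ^ k‖ := by
    refine Summable.of_nonneg_of_le (fun k => by positivity) ?_
      ((Real.summable_pow_div_factorial (c * T)).mul_right T)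
    · intro k
      rw [hnorm k]
      have habs : |coef k| ≤ 1 / (Nat.factorial k : ℝ) := by
        rw [hcoef, abs_div, abs_pow, abs_neg, abs_one, one_pow]
        have h1 : (1:ℝ) ≤ ((k+1).factorial : ℝ) := by
          exact_mod_cast Nat.one_le_iff_ne_zero.2 (Nat.factorial_ne_zero _)
        have h0 : (0:ℝ) < (Nat.factorial k : ℝ) := by exact_mod_cast Nat.factorial_pos k
        rw [abs_of_pos (by positivity)]
        apply div_le_div_of_nonneg_left one_pos.le h0
        exact le_mul_of_one_le_right h0.le h1
      have hTk : T ^ (k + 1) / (k + 1) ≤ T ^ k * T := by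
        rw [pow_succ]
        apply div_le_self (by positivity)
        exact_mod_cast Nat.one_le_iff_ne_zero.2 (Nat.succ_ne_zero k)
      calc |coef k| * c ^ k * (T ^ (k + 1) / (k + 1))
          ≤ (1 / (Nat.factorial k : ℝ)) * c ^ k * (T ^ k * T) := by
            apply mul_le_mul (mul_le_mul_of_nonneg_right habs (by positivity)) hTk (by positivity) (by positivity)
        _ = (c * T) ^ k / (Nat.factorial k) * T := by rw [mul_pow]; field_simp
  have hswap := MeasureTheory.integral_tsum_of_summable_integral_norm hint hsum
  have hF1eq : (∫ s in Ioc (0:ℝ) T, F1 (c * s)) = ∑' k : ℕ, ∫ s in Ioc (0:ℝ) T, coef k * (c * s) ^ k := by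
    rw [hswap]; rfl
  rw [hF1eq, eq_div_iff hc.ne']
  simp_rw [hval]
  rw [← tsum_mul_right]
  have hF0 : F0 (c * T) = 1 + ∑' k : ℕ, ((-1 : ℝ) ^ (k+1) / ((Nat.factorial (k+1) : ℝ)) ^ 2) * (c * T) ^ (k+1) := by
    unfold F0
    rw [Summable.tsum_eq_zero_add (summable_F0 (c * T))]
    simp
  rw [hF0]
  rw [show (1 : ℝ) - (1 + ∑' k : ℕ, ((-1 : ℝ) ^ (k+1) / ((Nat.factorial (k+1) : ℝ)) ^ 2) * (c * T) ^ (k+1))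
      = ∑' k : ℕ, -(((-1 : ℝ) ^ (k+1) / ((Nat.factorial (k+1) : ℝ)) ^ 2) * (c * T) ^ (k+1)) by
    rw [tsum_neg]; ring]
  apply tsum_congr
  intro k
  have hf : ((Nat.factorial (k+1) : ℝ)) = ((k:ℝ)+1) * (Nat.factorial k : ℝ) := by
    exact_mod_cast Nat.factorial_succ k
  have hf' : ((Nat.factorial (1+k) : ℝ)) = ((k:ℝ)+1) * (Nat.factorial k : ℝ) := by
    rw [Nat.add_comm 1 k]; exact hf
  rw [hcoef]
  have hk1 : ((k:ℝ) + 1) ≠ 0 := by positivity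
  field_simp [hf, hf', mul_pow, pow_succ]
  rw [hf]; ring

/-- explicit representation of `K₁` via the Bessel function `J₀`. -/
theorem K1_explicit (a b ε β : ℝ) (ha : 0 < a) (hb : 0 < b) (hε : 0 < ε) (hβ : 0 < β)
    (x t : ℝ) (ht : 0 < t) :
    K1 a b ε β x t =
      ∫ y in (0:ℝ)..t,
        Real.exp (-(x ^ 2 / (4 * ε * y)) - a * y - β * (t - y))
            / (2 * Real.sqrt (π * ε * y))
          * J0 (2 * Real.sqrt (b * y * (t - y))) := by
  have hπε : (0:ℝ) < π * ε := mul_pos Real.pi_pos hε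
  set C : ℝ := 1 / (2 * Real.sqrt (π * ε)) with hC
  set E : ℝ → ℝ := fun y => Real.exp (-(x ^ 2 / (4 * ε * y)) - a * y) with hE
  set g : ℝ → ℝ → ℝ :=
    fun y τ => Real.exp (-β * (t - y)) * E y * (b * Real.sqrt y * F1 (b * y * (τ - y))) with hg
  set H : ℝ → ℝ → ℝ := fun τ y => if y ≤ τ then g y τ else 0 with hH
  -- measurability
  have hEm : Measurable E := by
    apply Real.measurable_exp.comp
    apply Measurable.sub _ (measurable_id.const_mul a)
    apply Measurable.neg
    exact (measurable_const.div ((measurable_id.const_mul (4 * ε))))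
  have hgm : Measurable (fun p : ℝ × ℝ => g p.2 p.1) := by
    apply Measurable.mul
    · apply Measurable.mul
      · exact Real.measurable_exp.comp ((measurable_const.sub measurable_snd).const_mul (-β))
      · exact hEm.comp measurable_snd
    · apply Measurable.mul
      · exact (Real.continuous_sqrt.measurable.comp measurable_snd).const_mul b
      · exact measurable_F1.comp (((measurable_snd.const_mul b)).mul
          (measurable_fst.sub measurable_snd))
  have hHm : Measurable (Function.uncurry H) := by
    have : Function.uncurry H = fun p : ℝ × ℝ => if p.2 ≤ p.1 then g p.2 p.1 else 0 := rfl
    rw [this]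
    exact Measurable.ite (measurableSet_le measurable_snd measurable_fst) hgm measurable_const
  -- bound on g
  set M : ℝ := b * Real.sqrt t * Real.exp (b * t * t) with hM
  have hEle : ∀ y : ℝ, 0 < y → E y ≤ 1 := by
    intro y hy
    rw [hE]
    apply Real.exp_le_one_iff.2
    have h1 : 0 ≤ x ^ 2 / (4 * ε * y) := by positivity
    nlinarith
  have hgbound : ∀ y τ : ℝ, 0 < y → y ≤ t → y ≤ τ → τ ≤ t → |g y τ| ≤ M := by
    intro y τ hy0 hyt hyτ hτt
    have hτy : (0:ℝ) ≤ τ - y := by linarith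
    have hv0 : (0:ℝ) ≤ b * y * (τ - y) := mul_nonneg (mul_nonneg hb.le hy0.le) hτy
    have hvle : b * y * (τ - y) ≤ b * t * t := by
      calc b * y * (τ - y) ≤ b * t * (τ - y) :=
            mul_le_mul_of_nonneg_right (mul_le_mul_of_nonneg_left hyt hb.le) hτy
        _ ≤ b * t * t := mul_le_mul_of_nonneg_left (by linarith) (by positivity)
    have h1 : Real.exp (-β * (t - y)) ≤ 1 := Real.exp_le_one_iff.2 (by nlinarith)
    have h2 : E y ≤ 1 := hEle y hy0
    have hE0 : (0:ℝ) ≤ E y := le_of_lt (Real.exp_pos _)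
    have h3 : |F1 (b * y * (τ - y))| ≤ Real.exp (b * t * t) := by
      refine (abs_F1_le _).trans (Real.exp_le_exp.2 ?_)
      rw [abs_of_nonneg hv0]; exact hvle
    have hsq : Real.sqrt y ≤ Real.sqrt t := Real.sqrt_le_sqrt hyt
    have habs : |g y τ|
        = Real.exp (-β * (t - y)) * E y * (b * Real.sqrt y * |F1 (b * y * (τ - y))|) := by
      rw [hg]
      dsimp only
      rw [abs_mul, abs_of_nonneg (mul_nonneg (Real.exp_pos _).le hE0), abs_mul,
        abs_of_nonneg (mul_nonneg hb.le (Real.sqrt_nonneg y))]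
    rw [habs, hM]
    have hstep : b * Real.sqrt y * |F1 (b * y * (τ - y))|
        ≤ b * Real.sqrt t * Real.exp (b * t * t) :=
      mul_le_mul (mul_le_mul_of_nonneg_left hsq hb.le) h3 (abs_nonneg _) (by positivity)
    calc Real.exp (-β * (t - y)) * E y * (b * Real.sqrt y * |F1 (b * y * (τ - y))|)
        ≤ 1 * 1 * (b * Real.sqrt t * Real.exp (b * t * t)) :=
          mul_le_mul (mul_le_mul h1 h2 hE0 zero_le_one) hstep (by positivity) (by norm_num)
      _ = b * Real.sqrt t * Real.exp (b * t * t) := by ring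
  -- product integrability of H
  haveI : IsFiniteMeasure (volume.restrict (Ioc (0:ℝ) t)) := by
    constructor
    rw [Measure.restrict_apply_univ, Real.volume_Ioc]
    exact ENNReal.ofReal_lt_top
  have hprod : Integrable (Function.uncurry H)
      ((volume.restrict (Ioc (0:ℝ) t)).prod (volume.restrict (Ioc (0:ℝ) t))) := by
    apply Integrable.mono' (integrable_const M) hHm.aestronglyMeasurable
    rw [Measure.prod_restrict]
    filter_upwards [ae_restrict_mem (measurableSet_Ioc.prod measurableSet_Ioc)] with p hp
    obtain ⟨hp1, hp2⟩ := hp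
    rw [Real.norm_eq_abs]
    have : Function.uncurry H p = if p.2 ≤ p.1 then g p.2 p.1 else 0 := rfl
    rw [this]
    by_cases hle : p.2 ≤ p.1
    · rw [if_pos hle]
      exact hgbound p.2 p.1 hp2.1 hp2.2 hle hp1.2
    · rw [if_neg hle, abs_zero, hM]; positivity
  -- integrability of the 1/sqrt pieces
  have hrpow : IntegrableOn (fun τ : ℝ => τ ^ (-(1:ℝ)/2)) (Ioc 0 t) := by
    have h := intervalIntegral.intervalIntegrable_rpow' (a := 0) (b := t) (r := -(1:ℝ)/2)
      (by norm_num)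
    rwa [intervalIntegrable_iff_integrableOn_Ioc_of_le ht.le] at h
  have hsqrt_eq : ∀ τ : ℝ, 0 < τ → (Real.sqrt τ)⁻¹ = τ ^ (-(1:ℝ)/2) := by
    intro τ hτ
    rw [Real.sqrt_eq_rpow, ← Real.rpow_neg hτ.le]
    norm_num
  have hP1meas : Measurable (fun τ : ℝ => Real.exp (-β * (t - τ)) * E τ / Real.sqrt τ) := by
    apply Measurable.div
    · exact (Real.measurable_exp.comp ((measurable_const.sub measurable_id).const_mul (-β))).mul hEm
    · exact Real.continuous_sqrt.measurable
  have hP1int : IntegrableOn (fun τ : ℝ => Real.exp (-β * (t - τ)) * E τ / Real.sqrt τ)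
      (Ioc 0 t) := by
    apply Integrable.mono' hrpow hP1meas.aestronglyMeasurable
    filter_upwards [ae_restrict_mem measurableSet_Ioc] with τ hτ
    rw [Real.norm_eq_abs, abs_div, abs_mul, abs_of_nonneg (Real.exp_pos _).le,
      abs_of_nonneg (Real.exp_pos _).le, abs_of_nonneg (Real.sqrt_nonneg _)]
    have h1 : Real.exp (-β * (t - τ)) ≤ 1 := by
      apply Real.exp_le_one_iff.2; nlinarith [hτ.1, hτ.2]
    have h2 : E τ ≤ 1 := hEle τ hτ.1
    have h3 : (0:ℝ) < Real.sqrt τ := Real.sqrt_pos.2 hτ.1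
    rw [← hsqrt_eq τ hτ.1]
    rw [div_le_iff₀ h3, inv_mul_cancel₀ h3.ne']
    nlinarith [Real.exp_pos (-β * (t - τ)), (hEle τ hτ.1), Real.exp_pos (-(x ^ 2 / (4 * ε * τ)) - a * τ)]
  have hP2meas : Measurable
      (fun y : ℝ => Real.exp (-β * (t - y)) * E y * F0 (b * y * (t - y)) / Real.sqrt y) := by
    apply Measurable.div _ Real.continuous_sqrt.measurable
    apply Measurable.mul
    · exact (Real.measurable_exp.comp ((measurable_const.sub measurable_id).const_mul (-β))).mul hEm
    · exact measurable_F0.comp ((measurable_id.const_mul b).mul (measurable_const.sub measurable_id))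
  have hP2int : IntegrableOn
      (fun y : ℝ => Real.exp (-β * (t - y)) * E y * F0 (b * y * (t - y)) / Real.sqrt y)
      (Ioc 0 t) := by
    apply Integrable.mono' (hrpow.const_mul (Real.exp (b * t * t))) hP2meas.aestronglyMeasurable
    filter_upwards [ae_restrict_mem measurableSet_Ioc] with y hy
    rw [Real.norm_eq_abs, abs_div, abs_mul, abs_mul, abs_of_nonneg (Real.exp_pos _).le,
      abs_of_nonneg (Real.exp_pos _).le, abs_of_nonneg (Real.sqrt_nonneg _)]
    have h1 : Real.exp (-β * (t - y)) ≤ 1 := by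
      apply Real.exp_le_one_iff.2; nlinarith [hy.1, hy.2]
    have h2 : E y ≤ 1 := hEle y hy.1
    have h3 : (0:ℝ) < Real.sqrt y := Real.sqrt_pos.2 hy.1
    have hty : (0:ℝ) ≤ t - y := by linarith [hy.2]
    have hv0 : (0:ℝ) ≤ b * y * (t - y) := mul_nonneg (mul_nonneg hb.le hy.1.le) hty
    have hvle : b * y * (t - y) ≤ b * t * t := by
      calc b * y * (t - y) ≤ b * t * (t - y) :=
            mul_le_mul_of_nonneg_right (mul_le_mul_of_nonneg_left hy.2 hb.le) hty
        _ ≤ b * t * t := mul_le_mul_of_nonneg_left (by linarith [hy.1]) (by positivity)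
    have h4 : |F0 (b * y * (t - y))| ≤ Real.exp (b * t * t) := by
      refine (abs_F0_le _).trans (Real.exp_le_exp.2 ?_)
      rw [abs_of_nonneg hv0]; exact hvle
    rw [div_le_iff₀ h3, ← hsqrt_eq y hy.1]
    have h5 : Real.exp (b*t*t) * (Real.sqrt y)⁻¹ * Real.sqrt y = Real.exp (b*t*t) := by
      field_simp
    rw [h5]
    have hE0 : 0 ≤ E y := (Real.exp_pos _).le
    calc Real.exp (-β * (t - y)) * E y * |F0 (b * y * (t - y))|
        ≤ 1 * 1 * Real.exp (b * t * t) := by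
          apply mul_le_mul (mul_le_mul h1 h2 hE0 zero_le_one) h4 (abs_nonneg _) (by norm_num)
      _ = Real.exp (b * t * t) := by ring
  -- inner integral in y
  have hIic : ∀ τ : ℝ, τ ∈ Ioc (0:ℝ) t → Iic τ ∩ Ioc (0:ℝ) t = Ioc (0:ℝ) τ := by
    intro τ hτ
    ext z
    simp only [mem_inter_iff, mem_Iic, mem_Ioc]
    constructor
    · rintro ⟨h1, h2, h3⟩; exact ⟨h2, h1⟩
    · rintro ⟨h1, h2⟩; exact ⟨h2, h1, h2.trans hτ.2⟩
  have hinner_y : ∀ τ ∈ Ioc (0:ℝ) t, (∫ y in Ioc (0:ℝ) t, H τ y) = ∫ y in Ioc (0:ℝ) τ, g y τ := by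
    intro τ hτ
    have hind : ∀ y : ℝ, H τ y = (Iic τ).indicator (fun y => g y τ) y := by
      intro y
      simp only [hH]
      by_cases h : y ≤ τ
      · rw [if_pos h, indicator_of_mem (mem_Iic.2 h)]
      · rw [if_neg h, indicator_of_notMem (fun hc => h (mem_Iic.1 hc))]
    simp_rw [hind]
    rw [integral_indicator measurableSet_Iic, Measure.restrict_restrict measurableSet_Iic,
      hIic τ hτ]
  -- inner integral in τ
  have hIci : ∀ y : ℝ, y ∈ Ioc (0:ℝ) t → Ici y ∩ Ioc (0:ℝ) t = Icc y t := by
    intro y hy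
    ext z
    simp only [mem_inter_iff, mem_Ici, mem_Ioc, mem_Icc]
    constructor
    · rintro ⟨h1, h2, h3⟩; exact ⟨h1, h3⟩
    · rintro ⟨h1, h2⟩; exact ⟨h1, lt_of_lt_of_le hy.1 h1, h2⟩
  have hinner_τ : ∀ y ∈ Ioc (0:ℝ) t, (∫ τ in Ioc (0:ℝ) t, H τ y)
      = Real.exp (-β * (t - y)) * E y / Real.sqrt y
        - Real.exp (-β * (t - y)) * E y * F0 (b * y * (t - y)) / Real.sqrt y := by
    intro y hy
    have hind : ∀ τ : ℝ, H τ y = (Ici y).indicator (fun τ => g y τ) τ := by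
      intro τ
      simp only [hH]
      by_cases h : y ≤ τ
      · rw [if_pos h, indicator_of_mem (mem_Ici.2 h)]
      · rw [if_neg h, indicator_of_notMem (fun hc => h (mem_Ici.1 hc))]
    simp_rw [hind]
    rw [integral_indicator measurableSet_Ici, Measure.restrict_restrict measurableSet_Ici,
      hIci y hy, integral_Icc_eq_integral_Ioc]
    have hgc : ∀ τ : ℝ, g y τ
        = (Real.exp (-β * (t - y)) * E y * (b * Real.sqrt y)) * F1 (b * y * (τ - y)) := by
      intro τ; rw [hg]; ring
    simp_rw [hgc]
    rw [MeasureTheory.integral_const_mul]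
    have hshift : (∫ τ in Ioc y t, F1 (b * y * (τ - y)))
        = ∫ s in Ioc (0:ℝ) (t - y), F1 (b * y * s) := by
      rw [← intervalIntegral.integral_of_le hy.2,
        ← intervalIntegral.integral_of_le (by linarith [hy.2] : (0:ℝ) ≤ t - y)]
      have h2 := intervalIntegral.integral_comp_sub_right (a := y) (b := t)
        (fun s => F1 (b * y * s)) y
      rw [sub_self] at h2
      exact h2
    rw [hshift, key_int (b * y) (t - y) (mul_pos hb hy.1) (by linarith [hy.2])]
    have hs0 : Real.sqrt y ≠ 0 := (Real.sqrt_pos.2 hy.1).ne'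
    have hsy : Real.sqrt y * Real.sqrt y = y := Real.mul_self_sqrt hy.1.le
    rw [show b * y = b * (Real.sqrt y * Real.sqrt y) by rw [hsy]]
    field_simp
  -- rewriting the integrand of K1
  have hK0 : ∀ τ ∈ Ioc (0:ℝ) t,
      Real.exp (-β * (t - τ)) * K0 a b ε β x τ
        = C * (Real.exp (-β * (t - τ)) * E τ / Real.sqrt τ)
          - C * ∫ y in Ioc (0:ℝ) t, H τ y := by
    intro τ hτ
    rw [hinner_y τ hτ]
    have hIin : Real.exp (-β * (t - τ)) * (Real.sqrt b *
        ∫ y in (0:ℝ)..τ, Real.exp (-(x ^ 2 / (4 * ε * y)) - a * y - β * (τ - y))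
          / Real.sqrt (τ - y) * J1 (2 * Real.sqrt (b * y * (τ - y))))
        = ∫ y in Ioc (0:ℝ) τ, g y τ := by
      rw [intervalIntegral.integral_of_le hτ.1.le]
      rw [← MeasureTheory.integral_const_mul, ← MeasureTheory.integral_const_mul]
      rw [MeasureTheory.integral_Ioc_eq_integral_Ioo, MeasureTheory.integral_Ioc_eq_integral_Ioo]
      apply setIntegral_congr_fun measurableSet_Ioo
      intro y hy
      have hy0 : 0 < y := hy.1
      have hτy : 0 < τ - y := sub_pos.2 hy.2
      have hv : 0 ≤ b * y * (τ - y) := by positivity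
      dsimp only
      rw [J1_sqrt _ hv]
      rw [show -(x ^ 2 / (4 * ε * y)) - a * y - β * (τ - y)
          = (-(x ^ 2 / (4 * ε * y)) - a * y) + (-(β * (τ - y))) by ring, Real.exp_add]
      rw [Real.sqrt_mul (by positivity : (0:ℝ) ≤ b * y) (τ - y), Real.sqrt_mul hb.le y]
      have h1 : Real.sqrt (τ - y) ≠ 0 := (Real.sqrt_pos.2 hτy).ne'
      have h2 : Real.sqrt b * Real.sqrt b = b := Real.mul_self_sqrt hb.le
      simp only [hg, hE]
      rw [show Real.exp (-β * (t - y))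
          = Real.exp (-β * (t - τ)) * Real.exp (-(β * (τ - y))) by
        rw [← Real.exp_add]; congr 1; ring]
      field_simp
      ring_nf
      rw [Real.sq_sqrt hb.le]
    unfold K0
    rw [← hC, ← hIin]
    simp only [hE]
    ring
  -- main computation
  unfold K1
  rw [intervalIntegral.integral_of_le ht.le]
  rw [setIntegral_congr_fun measurableSet_Ioc (fun τ hτ => hK0 τ hτ)]
  have hH_marg : Integrable (fun τ => ∫ y in Ioc (0:ℝ) t, H τ y)
      (volume.restrict (Ioc (0:ℝ) t)) := hprod.integral_prod_left
  rw [integral_sub (hP1int.const_mul C) (hH_marg.const_mul C)]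
  rw [MeasureTheory.integral_const_mul, MeasureTheory.integral_const_mul]
  have hswap := MeasureTheory.integral_integral_swap (f := H) hprod
  rw [hswap]
  rw [setIntegral_congr_fun measurableSet_Ioc (fun y hy => hinner_τ y hy)]
  rw [integral_sub hP1int hP2int]
  rw [intervalIntegral.integral_of_le ht.le]
  have hRHS : EqOn
      (fun y => Real.exp (-(x ^ 2 / (4 * ε * y)) - a * y - β * (t - y))
          / (2 * Real.sqrt (π * ε * y)) * J0 (2 * Real.sqrt (b * y * (t - y))))
      (fun y => C * (Real.exp (-β * (t - y)) * E y * F0 (b * y * (t - y)) / Real.sqrt y))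
      (Ioc (0:ℝ) t) := by
    intro y hy
    have hv : 0 ≤ b * y * (t - y) := mul_nonneg (mul_nonneg hb.le hy.1.le) (by linarith [hy.2])
    dsimp only
    rw [J0_sqrt _ hv]
    rw [Real.sqrt_mul hπε.le]
    rw [show -(x ^ 2 / (4 * ε * y)) - a * y - β * (t - y)
        = (-(x ^ 2 / (4 * ε * y)) - a * y) + (-β * (t - y)) by ring, Real.exp_add]
    simp only [hC, hE]
    have h1 : Real.sqrt (π * ε) ≠ 0 := (Real.sqrt_pos.2 hπε).ne'
    have h2 : Real.sqrt y ≠ 0 := (Real.sqrt_pos.2 hy.1).ne'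
    field_simp
  rw [setIntegral_congr_fun measurableSet_Ioc hRHS]
  rw [MeasureTheory.integral_const_mul]
  ring
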